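/- Let m₁ ≠ m₂ ∈ ℝ² and m₃ = m₁ + ρ(m₂ − m₁) with 0 < ρ < 1 (collinear receivers). Then the image of the range map 𝒯₃ equals σ ∩ Q₃. Moreover, for 𝒯 ∈ Im(𝒯₃), the fiber 𝒯₃⁻¹(𝒯) has exactly two elements if 𝒯 lies in the topological interior of Q₃ and exactly one element if 𝒯 lies in the topological boundary of Q₃. -/

import Mathlib

private lemma nsq' (x : EuclideanSpace ℝ (Fin 2)) : ‖x‖^2 = (x 0)^2 + (x 1)^2 := by
  rw [EuclideanSpace.norm_eq, Real.sq_sqrt (by positivity)]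
  simp [Fin.sum_univ_two, sq_abs]

private lemma norm_eq_of_sq {x : EuclideanSpace ℝ (Fin 2)} {t : ℝ} (ht : 0 ≤ t)
    (h : ‖x‖^2 = t^2) : ‖x‖ = t := by
  have h1 : (‖x‖ - t) * (‖x‖ + t) = 0 := by linear_combination h
  rcases mul_eq_zero.mp h1 with h2 | h2
  · linarith [norm_nonneg x]
  · linarith [norm_nonneg x]

private lemma sq_lt_of_lt {a b : ℝ} (ha : 0 ≤ a) (h : a < b) : a^2 < b^2 := by
  nlinarith

private lemma lt_of_sq_lt {a b : ℝ} (hb : 0 ≤ b) (h : a^2 < b^2) : a < b := by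
  by_contra hcon
  push_neg at hcon
  nlinarith

private lemma le_of_sq_le {a b : ℝ} (hb : 0 ≤ b) (h : a^2 ≤ b^2) : a ≤ b := by
  by_contra hcon
  push_neg at hcon
  nlinarith

set_option maxHeartbeats 1000000 in
/-- with collinear receivers (m₃ strictly between m₁ and m₂), the image
of the range map 𝒯₃ equals σ ∩ Q₃, and the fibers have two elements over the interior
of Q₃ and one element over its boundary. -/
theorem stmt14 (m₁ m₂ : EuclideanSpace ℝ (Fin 2)) (hm : m₁ ≠ m₂) (ρ : ℝ)
    (hρ1 : 0 < ρ) (hρ2 : ρ < 1)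
    (m₃ : EuclideanSpace ℝ (Fin 2)) (hm₃ : m₃ = m₁ + ρ • (m₂ - m₁))
    (T3 : EuclideanSpace ℝ (Fin 2) → ℝ × ℝ × ℝ)
    (hT3 : ∀ x, T3 x = (‖x - m₁‖, ‖x - m₂‖, ‖x - m₃‖))
    (Q3 : Set (ℝ × ℝ × ℝ))
    (hQ3 : Q3 = {T : ℝ × ℝ × ℝ |
      T.1 - T.2.2 ≤ ρ * ‖m₂ - m₁‖ ∧ T.2.1 - T.2.2 ≤ (1 - ρ) * ‖m₂ - m₁‖ ∧
      ‖m₂ - m₁‖ ≤ T.1 + T.2.1 ∧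
      0 ≤ (1 - ρ) * ‖m₂ - m₁‖ * T.1 + ρ * ‖m₂ - m₁‖ * T.2.1 - ‖m₂ - m₁‖ * T.2.2})
    (σ : Set (ℝ × ℝ × ℝ))
    (hσ : σ = {T : ℝ × ℝ × ℝ |
      T.2.2 ^ 2 = (1 - ρ) * T.1 ^ 2 + ρ * T.2.1 ^ 2 - ρ * (1 - ρ) * ‖m₂ - m₁‖ ^ 2}) :
    Set.range T3 = σ ∩ Q3 ∧
    ∀ T ∈ Set.range T3,
      (T ∈ interior Q3 → (T3 ⁻¹' {T}).ncard = 2) ∧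
      (T ∈ frontier Q3 → (T3 ⁻¹' {T}).ncard = 1) := by
  have hdn : 0 < ‖m₂ - m₁‖ := by
    rw [norm_pos_iff]; exact sub_ne_zero.mpr (Ne.symm hm)
  obtain ⟨d, hd_def⟩ : ∃ d : ℝ, d = ‖m₂ - m₁‖ := ⟨_, rfl⟩
  rw [← hd_def] at hQ3 hσ
  have hd : 0 < d := by rw [hd_def]; exact hdn
  have hd0 : d ≠ 0 := ne_of_gt hd
  have hρ3 : 0 < 1 - ρ := by linarith
  have hd2 : d^2 = (m₂ 0 - m₁ 0)^2 + (m₂ 1 - m₁ 1)^2 := by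
    rw [hd_def, nsq' (m₂ - m₁)]; simp
  have hns : ∀ z q : EuclideanSpace ℝ (Fin 2),
      ‖z - q‖^2 = (z 0 - q 0)^2 + (z 1 - q 1)^2 := by
    intro z q; rw [nsq']; simp
  have hm30 : m₃ 0 = m₁ 0 + ρ * (m₂ 0 - m₁ 0) := by
    rw [hm₃]; simp only [PiLp.add_apply, PiLp.smul_apply, PiLp.sub_apply, smul_eq_mul]
  have hm31 : m₃ 1 = m₁ 1 + ρ * (m₂ 1 - m₁ 1) := by
    rw [hm₃]; simp only [PiLp.add_apply, PiLp.smul_apply, PiLp.sub_apply, smul_eq_mul]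
  have hm3v : m₃ - m₁ = ρ • (m₂ - m₁) := by rw [hm₃, add_sub_cancel_left]
  have hm3v2 : m₂ - m₃ = (1 - ρ) • (m₂ - m₁) := by
    rw [hm₃, sub_smul, one_smul]; abel
  have hx3v : ∀ x : EuclideanSpace ℝ (Fin 2),
      x - m₃ = (1-ρ) • (x - m₁) + ρ • (x - m₂) := by
    intro x; rw [hm₃, sub_smul, one_smul, smul_sub, smul_sub, smul_sub]; abel
  have hnorm3 : ‖m₃ - m₁‖ = ρ * d := by
    rw [hm3v, norm_smul, Real.norm_eq_abs, abs_of_pos hρ1, hd_def]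
  have hnorm32 : ‖m₂ - m₃‖ = (1-ρ) * d := by
    rw [hm3v2, norm_smul, Real.norm_eq_abs, abs_of_pos hρ3, hd_def]
  -- Forward inclusion
  have hforward : ∀ x, T3 x ∈ σ ∩ Q3 := by
    intro x
    rw [hT3]
    constructor
    · rw [hσ]; simp only [Set.mem_setOf_eq]
      rw [hns x m₁, hns x m₂, hns x m₃, hm30, hm31]
      linear_combination (ρ*(1-ρ)) * hd2
    · rw [hQ3]; simp only [Set.mem_setOf_eq]
      refine ⟨?_, ?_, ?_, ?_⟩
      · have h := norm_sub_le_norm_sub_add_norm_sub x m₃ m₁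
        rw [hnorm3] at h; linarith
      · have h := norm_sub_le_norm_sub_add_norm_sub x m₃ m₂
        rw [norm_sub_rev m₃ m₂, hnorm32] at h; linarith
      · have h := norm_sub_le_norm_sub_add_norm_sub m₂ x m₁
        rw [norm_sub_rev m₂ x, ← hd_def] at h; linarith
      · have h : ‖x - m₃‖ ≤ (1-ρ) * ‖x - m₁‖ + ρ * ‖x - m₂‖ := by
          rw [hx3v x]
          refine le_trans (norm_add_le _ _) ?_
          rw [norm_smul, norm_smul, Real.norm_eq_abs, Real.norm_eq_abs,
            abs_of_pos hρ1, abs_of_pos hρ3]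
        have h' : 0 ≤ d * ((1-ρ) * ‖x - m₁‖ + ρ * ‖x - m₂‖ - ‖x - m₃‖) :=
          mul_nonneg hd.le (by linarith)
        have hexp : d * ((1-ρ) * ‖x - m₁‖ + ρ * ‖x - m₂‖ - ‖x - m₃‖)
            = (1-ρ)*d*‖x - m₁‖ + ρ*d*‖x - m₂‖ - d*‖x - m₃‖ := by ring
        linarith [h', hexp]
  -- central construction
  have main : ∀ t1 t2 t3 : ℝ,
      t3^2 = (1-ρ)*t1^2 + ρ*t2^2 - ρ*(1-ρ)*d^2 →
      t1 - t3 ≤ ρ*d → t2 - t3 ≤ (1-ρ)*d → d ≤ t1 + t2 →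
      0 ≤ (1-ρ)*d*t1 + ρ*d*t2 - d*t3 →
      ∃ b : ℝ, 0 ≤ b ∧ 4*d^2*b^2 = (d^2-(t1-t2)^2)*((t1+t2)^2-d^2) ∧
        ∃ x y : EuclideanSpace ℝ (Fin 2),
          T3 ⁻¹' {(t1,t2,t3)} = {x, y} ∧ (b = 0 → x = y) ∧ (b ≠ 0 → x ≠ y) := by
    intro t1 t2 t3 hs h1 h2 h3 h4
    have ht3 : 0 ≤ t3 := by linarith
    have h4' : t3 ≤ (1-ρ)*t1 + ρ*t2 := by
      by_contra hcon
      push_neg at hcon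
      have hneg : d * ((1-ρ)*t1 + ρ*t2 - t3) < 0 :=
        mul_neg_of_pos_of_neg hd (by linarith)
      have hexp : d * ((1-ρ)*t1 + ρ*t2 - t3) = (1-ρ)*d*t1 + ρ*d*t2 - d*t3 := by ring
      linarith [hneg, hexp]
    have hsq3 : t3^2 ≤ ((1-ρ)*t1 + ρ*t2)^2 := pow_le_pow_left₀ ht3 h4' 2
    have hkey : t3^2 - ((1-ρ)*t1+ρ*t2)^2 = ρ*(1-ρ)*((t1-t2)^2 - d^2) := by
      linear_combination hs
    have hsub : (t1-t2)^2 ≤ d^2 := by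
      by_contra hcon
      push_neg at hcon
      have : 0 < ρ*(1-ρ)*((t1-t2)^2 - d^2) :=
        mul_pos (mul_pos hρ1 hρ3) (by linarith)
      linarith
    have hd12 : t1 - t2 ≤ d := le_of_sq_le hd.le hsub
    have hd21 : t2 - t1 ≤ d := le_of_sq_le hd.le (by linarith [hsub, sq_abs (t1-t2),
      (by ring : (t2-t1)^2 = (t1-t2)^2)])
    have ht1 : 0 ≤ t1 := by linarith
    have ht2 : 0 ≤ t2 := by linarith
    obtain ⟨a, ha⟩ : ∃ a : ℝ, 2*d*a = t1^2 - t2^2 + d^2 :=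
      ⟨(t1^2 - t2^2 + d^2)/(2*d), by field_simp⟩
    have hfac : 4*d^2*(t1^2 - a^2) = (d^2-(t1-t2)^2)*((t1+t2)^2-d^2) := by
      linear_combination (-(2*d*a + (t1^2 - t2^2 + d^2))) * ha
    have hf2 : 0 ≤ (t1+t2)^2 - d^2 := by
      have := pow_le_pow_left₀ hd.le h3 2; linarith
    have hf1 : 0 ≤ d^2 - (t1-t2)^2 := by linarith [hsub]
    have hdsq : 0 < d^2 := by positivity
    have hbsq : 0 ≤ t1^2 - a^2 := by
      by_contra hcon
      push_neg at hcon
      have hneg : 4*d^2*(t1^2 - a^2) < 0 :=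
        mul_neg_of_pos_of_neg (by positivity) hcon
      linarith [mul_nonneg hf1 hf2]
    obtain ⟨b, hb0, hb2⟩ : ∃ b : ℝ, 0 ≤ b ∧ b^2 = t1^2 - a^2 :=
      ⟨Real.sqrt (t1^2 - a^2), Real.sqrt_nonneg _, Real.sq_sqrt hbsq⟩
    obtain ⟨w, hw0, hw1⟩ : ∃ w : EuclideanSpace ℝ (Fin 2),
        w 0 = -(m₂ 1 - m₁ 1) ∧ w 1 = m₂ 0 - m₁ 0 :=
      ⟨(WithLp.equiv 2 (Fin 2 → ℝ)).symm ![-(m₂ 1 - m₁ 1), m₂ 0 - m₁ 0], by simp, by simp⟩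
    have hcomb : ∀ s t : ℝ, ‖s • (m₂ - m₁) + t • w‖^2 = (s^2+t^2)*d^2 := by
      intro s t
      rw [nsq']
      simp only [PiLp.add_apply, PiLp.smul_apply, smul_eq_mul, hw0, hw1, PiLp.sub_apply]
      linear_combination (-(s^2+t^2)) * hd2
    obtain ⟨X, hX0, hX1, hv1, hv2, hv3⟩ :
        ∃ X : ℝ → EuclideanSpace ℝ (Fin 2),
          (∀ t, X t 0 = m₁ 0 + (a/d * (m₂ 0 - m₁ 0) - t/d * (m₂ 1 - m₁ 1))) ∧
          (∀ t, X t 1 = m₁ 1 + (a/d * (m₂ 1 - m₁ 1) + t/d * (m₂ 0 - m₁ 0))) ∧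
          (∀ τ : ℝ, X τ - m₁ = (a/d) • (m₂ - m₁) + (τ/d) • w) ∧
          (∀ τ : ℝ, X τ - m₂ = (a/d - 1) • (m₂ - m₁) + (τ/d) • w) ∧
          (∀ τ : ℝ, X τ - m₃ = (a/d - ρ) • (m₂ - m₁) + (τ/d) • w) := by
      refine ⟨fun t => m₁ + ((a/d) • (m₂ - m₁) + (t/d) • w), ?_, ?_, ?_, ?_, ?_⟩
      · intro t
        simp only [PiLp.add_apply, PiLp.smul_apply, smul_eq_mul, hw0, hw1, PiLp.sub_apply]
        try ring
      · intro t
        simp only [PiLp.add_apply, PiLp.smul_apply, smul_eq_mul, hw0, hw1, PiLp.sub_apply]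
        try ring
      · intro τ; exact add_sub_cancel_left _ _
      · intro τ; rw [sub_smul, one_smul]
        ext i; simp only [PiLp.add_apply, PiLp.sub_apply, PiLp.smul_apply, smul_eq_mul]; ring
      · intro τ; rw [hm₃, sub_smul]
        ext i; simp only [PiLp.add_apply, PiLp.sub_apply, PiLp.smul_apply, smul_eq_mul]; ring
    have hXnorm : ∀ τ : ℝ, τ^2 = t1^2 - a^2 → T3 (X τ) = (t1, t2, t3) := by
      intro τ ht
      have k1 : ‖X τ - m₁‖^2 = a^2 + τ^2 := by
        rw [hv1, hcomb]; field_simp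
      have k2 : ‖X τ - m₂‖^2 = (a-d)^2 + τ^2 := by
        rw [hv2, hcomb]; field_simp; try ring
      have k3 : ‖X τ - m₃‖^2 = (a-ρ*d)^2 + τ^2 := by
        rw [hv3, hcomb]; field_simp; try ring
      have n1 : ‖X τ - m₁‖ = t1 := norm_eq_of_sq ht1 (by rw [k1]; linarith [ht])
      have n2 : ‖X τ - m₂‖ = t2 := norm_eq_of_sq ht2 (by rw [k2]; linear_combination ht - ha)
      have n3 : ‖X τ - m₃‖ = t3 :=
        norm_eq_of_sq ht3 (by rw [k3]; linear_combination ht - ρ*ha - hs)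
      rw [hT3, n1, n2, n3]
    have huniq : ∀ y : EuclideanSpace ℝ (Fin 2),
        T3 y = (t1,t2,t3) → y = X b ∨ y = X (-b) := by
      intro y hy
      rw [hT3] at hy
      have hy1 : ‖y - m₁‖ = t1 := congrArg Prod.fst hy
      have hy2 : ‖y - m₂‖ = t2 := congrArg (fun p : ℝ×ℝ×ℝ => p.2.1) hy
      have e1 : (y 0 - m₁ 0)^2 + (y 1 - m₁ 1)^2 = t1^2 := by rw [← hns, hy1]
      have e2 : (y 0 - m₂ 0)^2 + (y 1 - m₂ 1)^2 = t2^2 := by rw [← hns, hy2]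
      have hα : (y 0 - m₁ 0)*(m₂ 0 - m₁ 0) + (y 1 - m₁ 1)*(m₂ 1 - m₁ 1) = a*d := by
        linear_combination (1/2)*e1 - (1/2)*e2 - (1/2)*hd2 - (1/2)*ha
      have hβ2 : (-(y 0 - m₁ 0)*(m₂ 1 - m₁ 1) + (y 1 - m₁ 1)*(m₂ 0 - m₁ 0))^2
          = (d*b)^2 := by
        linear_combination ((m₂ 0 - m₁ 0)^2 + (m₂ 1 - m₁ 1)^2)*e1 - t1^2*hd2 - d^2*hb2
          - ((y 0 - m₁ 0)*(m₂ 0 - m₁ 0) + (y 1 - m₁ 1)*(m₂ 1 - m₁ 1) + a*d)*hα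
      have hyc : ∀ τ : ℝ,
          -(y 0 - m₁ 0)*(m₂ 1 - m₁ 1) + (y 1 - m₁ 1)*(m₂ 0 - m₁ 0) = d*τ → y = X τ := by
        intro τ hβτ
        have c0 : d^2 * y 0 = d^2 * X τ 0 := by
          rw [hX0]
          have expand : d^2 * (m₁ 0 + (a/d * (m₂ 0 - m₁ 0) - τ/d * (m₂ 1 - m₁ 1)))
              = d^2 * m₁ 0 + (d*a) * (m₂ 0 - m₁ 0) - (d*τ) * (m₂ 1 - m₁ 1) := by
            field_simp
            ring
          rw [expand]
          linear_combination (y 0 - m₁ 0)*hd2 + (m₂ 0 - m₁ 0)*hα - (m₂ 1 - m₁ 1)*hβτ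
        have c1 : d^2 * y 1 = d^2 * X τ 1 := by
          rw [hX1]
          have expand : d^2 * (m₁ 1 + (a/d * (m₂ 1 - m₁ 1) + τ/d * (m₂ 0 - m₁ 0)))
              = d^2 * m₁ 1 + (d*a) * (m₂ 1 - m₁ 1) + (d*τ) * (m₂ 0 - m₁ 0) := by
            field_simp
            ring
          rw [expand]
          linear_combination (y 1 - m₁ 1)*hd2 + (m₂ 1 - m₁ 1)*hα + (m₂ 0 - m₁ 0)*hβτ
        have hc0 : y 0 = X τ 0 := mul_left_cancel₀ (by positivity) c0
        have hc1 : y 1 = X τ 1 := mul_left_cancel₀ (by positivity) c1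
        ext i
        fin_cases i
        · exact hc0
        · exact hc1
      have hβ : -(y 0 - m₁ 0)*(m₂ 1 - m₁ 1) + (y 1 - m₁ 1)*(m₂ 0 - m₁ 0) = d*b ∨
          -(y 0 - m₁ 0)*(m₂ 1 - m₁ 1) + (y 1 - m₁ 1)*(m₂ 0 - m₁ 0) = -(d*b) := by
        apply mul_self_eq_mul_self_iff.mp
        rw [← pow_two, ← pow_two]
        exact hβ2
      rcases hβ with hβ | hβ
      · exact Or.inl (hyc b hβ)
      · exact Or.inr (hyc (-b) (by rw [mul_neg]; exact hβ))
    refine ⟨b, hb0, by rw [hb2]; exact hfac, X b, X (-b), ?_, ?_, ?_⟩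
    · ext y
      simp only [Set.mem_preimage, Set.mem_singleton_iff, Set.mem_insert_iff]
      constructor
      · exact huniq y
      · rintro (rfl | rfl)
        · exact hXnorm b hb2
        · exact hXnorm (-b) (by rw [neg_sq]; exact hb2)
    · intro hb; rw [hb, neg_zero]
    · intro hbne hXX
      have h0 := congrArg (fun z : EuclideanSpace ℝ (Fin 2) => z 0) hXX
      have h1 := congrArg (fun z : EuclideanSpace ℝ (Fin 2) => z 1) hXX
      simp only at h0 h1
      rw [hX0 b, hX0 (-b)] at h0
      rw [hX1 b, hX1 (-b)] at h1
      have hu1 : m₂ 1 - m₁ 1 = 0 := by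
        have hb1 : b * (m₂ 1 - m₁ 1) = 0 := by
          field_simp at h0
          linarith [h0]
        rcases mul_eq_zero.mp hb1 with h | h
        · exact absurd h hbne
        · exact h
      have hu0 : m₂ 0 - m₁ 0 = 0 := by
        have hb1 : b * (m₂ 0 - m₁ 0) = 0 := by
          field_simp at h1
          linarith [h1]
        rcases mul_eq_zero.mp hb1 with h | h
        · exact absurd h hbne
        · exact h
      have hzero : d^2 = 0 := by rw [hd2, hu0, hu1]; ring
      exact absurd hzero (by positivity)
  -- Part 1
  have hrange : Set.range T3 = σ ∩ Q3 := by
    ext T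
    constructor
    · rintro ⟨x, rfl⟩; exact hforward x
    · rintro ⟨hσT, hQT⟩
      obtain ⟨t1, t2, t3⟩ := T
      rw [hσ] at hσT; simp only [Set.mem_setOf_eq] at hσT
      rw [hQ3] at hQT; simp only [Set.mem_setOf_eq] at hQT
      obtain ⟨h1, h2, h3, h4⟩ := hQT
      obtain ⟨b, hb0, hfacb, x, y, hfib, hXeq, hXne⟩ := main t1 t2 t3 hσT h1 h2 h3 h4
      have hx : x ∈ T3 ⁻¹' {(t1,t2,t3)} := by rw [hfib]; left; rfl
      exact ⟨x, hx⟩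
  refine ⟨hrange, ?_⟩
  rintro ⟨t1, t2, t3⟩ hT
  have hmem : ((t1,t2,t3) : ℝ×ℝ×ℝ) ∈ σ ∩ Q3 := hrange ▸ hT
  obtain ⟨hσT, hQT⟩ := hmem
  rw [hσ] at hσT; simp only [Set.mem_setOf_eq] at hσT
  rw [hQ3] at hQT; simp only [Set.mem_setOf_eq] at hQT
  obtain ⟨h1, h2, h3, h4⟩ := hQT
  have ht3 : 0 ≤ t3 := by linarith
  have h4' : t3 ≤ (1-ρ)*t1 + ρ*t2 := by
    by_contra hcon
    push_neg at hcon
    have hneg : d * ((1-ρ)*t1 + ρ*t2 - t3) < 0 :=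
      mul_neg_of_pos_of_neg hd (by linarith)
    have hexp : d * ((1-ρ)*t1 + ρ*t2 - t3) = (1-ρ)*d*t1 + ρ*d*t2 - d*t3 := by ring
    linarith [hneg, hexp]
  have hkey : t3^2 - ((1-ρ)*t1+ρ*t2)^2 = ρ*(1-ρ)*((t1-t2)^2 - d^2) := by
    linear_combination hσT
  have hsq3 : t3^2 ≤ ((1-ρ)*t1 + ρ*t2)^2 := pow_le_pow_left₀ ht3 h4' 2
  have hsub : (t1-t2)^2 ≤ d^2 := by
    by_contra hcon
    push_neg at hcon
    have : 0 < ρ*(1-ρ)*((t1-t2)^2 - d^2) :=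
      mul_pos (mul_pos hρ1 hρ3) (by linarith)
    linarith
  have hf2nn : 0 ≤ (t1+t2)^2 - d^2 := by
    have := pow_le_pow_left₀ hd.le h3 2; linarith
  have hdsq : 0 < d^2 := by positivity
  obtain ⟨b, hb0, hfacb, x, y, hfib, hXeq, hXne⟩ := main t1 t2 t3 hσT h1 h2 h3 h4
  constructor
  · -- interior → two elements
    intro hint
    rw [mem_interior_iff_mem_nhds, Metric.mem_nhds_iff] at hint
    obtain ⟨ε, hε, hball⟩ := hint
    have hA : ((t1 - ε/2, t2, t3) : ℝ×ℝ×ℝ) ∈ Q3 := by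
      apply hball
      simp only [Metric.mem_ball, Prod.dist_eq, Real.dist_eq, sub_self, abs_zero]
      rw [show t1 - ε/2 - t1 = -(ε/2) by ring, abs_neg, abs_of_pos (by linarith)]
      rw [max_self, max_eq_left (by linarith : (0:ℝ) ≤ ε/2)]
      linarith
    have hB : ((t1, t2, t3 + ε/2) : ℝ×ℝ×ℝ) ∈ Q3 := by
      apply hball
      simp only [Metric.mem_ball, Prod.dist_eq, Real.dist_eq, sub_self, abs_zero]
      rw [show t3 + ε/2 - t3 = ε/2 by ring, abs_of_pos (by linarith)]
      rw [max_eq_right (by linarith : (0:ℝ) ≤ ε/2), max_eq_right (by linarith : (0:ℝ) ≤ ε/2)]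
      linarith
    rw [hQ3] at hA hB; simp only [Set.mem_setOf_eq] at hA hB
    have s3 : d < t1 + t2 := by linarith [hA.2.2.1]
    have s4 : 0 < (1-ρ)*d*t1 + ρ*d*t2 - d*t3 := by
      have hB4 := hB.2.2.2
      have hexp : d*(t3 + ε/2) = d*t3 + d*(ε/2) := by ring
      have hdε : 0 < d*(ε/2) := by positivity
      linarith [hB4, hexp, hdε]
    have h4s : t3 < (1-ρ)*t1 + ρ*t2 := by
      by_contra hcon
      push_neg at hcon
      have hnn : d * ((1-ρ)*t1 + ρ*t2 - t3) ≤ 0 :=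
        mul_nonpos_of_nonneg_of_nonpos hd.le (by linarith)
      have hexp : d * ((1-ρ)*t1 + ρ*t2 - t3) = (1-ρ)*d*t1 + ρ*d*t2 - d*t3 := by ring
      linarith [hnn, hexp]
    have hsubs : (t1-t2)^2 < d^2 := by
      have hL : t3^2 < ((1-ρ)*t1 + ρ*t2)^2 := sq_lt_of_lt ht3 h4s
      by_contra hcon
      push_neg at hcon
      have : 0 ≤ ρ*(1-ρ)*((t1-t2)^2 - d^2) :=
        mul_nonneg (mul_pos hρ1 hρ3).le (by linarith)
      linarith
    have hbne : b ≠ 0 := by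
      intro h0
      rw [h0] at hfacb
      have f1 : 0 < d^2 - (t1-t2)^2 := by linarith
      have f2 : 0 < (t1+t2)^2 - d^2 := by
        have := sq_lt_of_lt hd.le s3; linarith
      have := mul_pos f1 f2
      have hz : 4*d^2*(0:ℝ)^2 = 0 := by ring
      linarith [hfacb, hz, this]
    rw [hfib]
    exact Set.ncard_pair (hXne hbne)
  · -- frontier → one element
    intro hfr
    have hni : ((t1,t2,t3) : ℝ×ℝ×ℝ) ∉ interior Q3 := hfr.2
    have hb0' : b = 0 := by
      by_contra hbne
      apply hni
      have hbpos : 0 < b := lt_of_le_of_ne hb0 (Ne.symm hbne)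
      have hprod : 0 < (d^2-(t1-t2)^2)*((t1+t2)^2-d^2) := by
        rw [← hfacb]; positivity
      have hf1nn : 0 ≤ d^2 - (t1-t2)^2 := by linarith
      have hf2 : 0 < (t1+t2)^2 - d^2 := by
        rcases lt_or_eq_of_le hf2nn with h | h
        · exact h
        · exfalso
          have : (d^2-(t1-t2)^2)*((t1+t2)^2-d^2) = 0 := by rw [← h, mul_zero]
          linarith
      have hf1 : 0 < d^2 - (t1-t2)^2 := by
        rcases lt_or_eq_of_le hf1nn with h | h
        · exact h
        · exfalso
          have : (d^2-(t1-t2)^2)*((t1+t2)^2-d^2) = 0 := by rw [← h, zero_mul]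
          linarith
      have s3 : d < t1 + t2 := by
        by_contra hcon
        push_neg at hcon
        have : (t1+t2)^2 ≤ d^2 := pow_le_pow_left₀ (by linarith) hcon 2
        linarith
      have h4s : t3 < (1-ρ)*t1 + ρ*t2 := by
        by_contra hcon
        push_neg at hcon
        have hL : ((1-ρ)*t1 + ρ*t2)^2 ≤ t3^2 := pow_le_pow_left₀ (by linarith) hcon 2
        have hplus : 0 < ρ*(1-ρ)*(d^2 - (t1-t2)^2) := mul_pos (mul_pos hρ1 hρ3) hf1
        have e : ρ*(1-ρ)*((t1-t2)^2 - d^2) = -(ρ*(1-ρ)*(d^2-(t1-t2)^2)) := by ring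
        linarith [hkey, hL, hplus, e]
      have s4 : 0 < (1-ρ)*d*t1 + ρ*d*t2 - d*t3 := by
        have hpos : 0 < d * ((1-ρ)*t1 + ρ*t2 - t3) := mul_pos hd (by linarith)
        have hexp : d * ((1-ρ)*t1 + ρ*t2 - t3) = (1-ρ)*d*t1 + ρ*d*t2 - d*t3 := by ring
        linarith [hpos, hexp]
      have k1 : 0 < t2 - t1 + d := by
        have h' : t1 - t2 < d := lt_of_sq_lt hd.le (by linarith)
        linarith
      have k2 : 0 < t1 - t2 + d := by
        have h' : t2 - t1 < d := lt_of_sq_lt hd.le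
          (by linarith [(by ring : (t2-t1)^2 = (t1-t2)^2)])
        linarith
      have k3 : 0 < t1 + t2 - d := by linarith
      have s1 : t1 - t3 < ρ*d := by
        have e1 : t3^2 - (t1-ρ*d)^2 = ρ*((t2-t1+d)*(t1+t2-d)) := by
          linear_combination hσT
        have hpos : 0 < ρ*((t2-t1+d)*(t1+t2-d)) := mul_pos hρ1 (mul_pos k1 k3)
        have hlt : (t1-ρ*d)^2 < t3^2 := by linarith
        have := lt_of_sq_lt ht3 hlt
        linarith
      have s2 : t2 - t3 < (1-ρ)*d := by
        have e2 : t3^2 - (t2-(1-ρ)*d)^2 = (1-ρ)*((t1-t2+d)*(t1+t2-d)) := by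
          linear_combination hσT
        have hpos : 0 < (1-ρ)*((t1-t2+d)*(t1+t2-d)) := mul_pos hρ3 (mul_pos k2 k3)
        have hlt : (t2-(1-ρ)*d)^2 < t3^2 := by linarith
        have := lt_of_sq_lt ht3 hlt
        linarith
      have hopen : IsOpen {T : ℝ×ℝ×ℝ | T.1 - T.2.2 < ρ*d ∧ T.2.1 - T.2.2 < (1-ρ)*d ∧
          d < T.1 + T.2.1 ∧ 0 < (1-ρ)*d*T.1 + ρ*d*T.2.1 - d*T.2.2} := by
        rw [Set.setOf_and, Set.setOf_and, Set.setOf_and]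
        exact ((isOpen_lt (by fun_prop) continuous_const).inter
          ((isOpen_lt (by fun_prop) continuous_const).inter
            ((isOpen_lt continuous_const (by fun_prop)).inter
              (isOpen_lt continuous_const (by fun_prop)))))
      have hsubQ : {T : ℝ×ℝ×ℝ | T.1 - T.2.2 < ρ*d ∧ T.2.1 - T.2.2 < (1-ρ)*d ∧
          d < T.1 + T.2.1 ∧ 0 < (1-ρ)*d*T.1 + ρ*d*T.2.1 - d*T.2.2} ⊆ Q3 := by
        rw [hQ3]
        intro T hT
        exact ⟨le_of_lt hT.1, le_of_lt hT.2.1, le_of_lt hT.2.2.1, le_of_lt hT.2.2.2⟩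
      exact interior_maximal hsubQ hopen ⟨s1, s2, s3, s4⟩
    have hxy := hXeq hb0'
    rw [hfib, hxy, Set.pair_eq_singleton]
    exact Set.ncard_singleton _
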